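/- Let T ∈ L(H) be a Riesz operator on a separable infinite-dimensional complex Hilbert space H, i.e. for every λ ∈ ℂ with λ ≠ 0 the operator T − λI is Fredholm. Then T is not a universal operator. -/

import Mathlib

noncomputable section

/-- Universal operator on a complex Hilbert space. -/
def IsUniversal {H : Type*} [NormedAddCommGroup H] [InnerProductSpace ℂ H]
    (U : H →L[ℂ] H) : Prop :=
  ∀ T : H →L[ℂ] H, ∃ M : Submodule ℂ H, IsClosed (M : Set H) ∧ (∀ x ∈ M, U x ∈ M) ∧
    ∃ c : ℂ, c ≠ 0 ∧ ∃ J : H ≃L[ℂ] M, ∀ x : H, U (J x : H) = c • ((J (T x) : H))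

/-- A bounded operator is Fredholm if its kernel is finite-dimensional and its range is
closed of finite codimension. -/
def IsFredholmOp {H : Type*} [NormedAddCommGroup H] [InnerProductSpace ℂ H]
    (S : H →L[ℂ] H) : Prop :=
  FiniteDimensional ℂ (LinearMap.ker (S : H →ₗ[ℂ] H)) ∧ IsClosed (LinearMap.range (S : H →ₗ[ℂ] H) : Set H) ∧
    FiniteDimensional ℂ (H ⧸ LinearMap.range (S : H →ₗ[ℂ] H))

/-- A Riesz operator (i.e. `T - λI` is Fredholm for every `λ ≠ 0`) is not universal. -/
theorem not_universal_of_riesz {H : Type*} [NormedAddCommGroup H]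
    [InnerProductSpace ℂ H] [CompleteSpace H] [TopologicalSpace.SeparableSpace H]
    (hinf : ¬ FiniteDimensional ℂ H)
    (T : H →L[ℂ] H)
    (h : ∀ z : ℂ, z ≠ 0 → IsFredholmOp (T - z • (1 : H →L[ℂ] H))) :
    ¬ IsUniversal T := by
  intro hu
  obtain ⟨M, hMc, hMinv, c, hc, J, hJ⟩ := hu 1
  have hker : ∀ x : H, ((J x : H)) ∈ LinearMap.ker ((T - c • (1 : H →L[ℂ] H)) : H →ₗ[ℂ] H) := by
    intro x
    have := hJ x
    simp only [ContinuousLinearMap.one_apply] at this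
    simp [LinearMap.mem_ker, this]
  have hle : M ≤ LinearMap.ker ((T - c • (1 : H →L[ℂ] H)) : H →L[ℂ] H).toLinearMap := by
    intro m hm
    have : ((J (J.symm ⟨m, hm⟩) : H)) ∈
        LinearMap.ker ((T - c • (1 : H →L[ℂ] H)) : H →ₗ[ℂ] H) := hker _
    simpa using this
  haveI hfin : FiniteDimensional ℂ
      (LinearMap.ker ((T - c • (1 : H →L[ℂ] H)) : H →L[ℂ] H).toLinearMap) := (h c hc).1
  haveI hMfin : FiniteDimensional ℂ M := Submodule.finiteDimensional_of_le hle
  exact hinf (LinearEquiv.finiteDimensional J.symm.toLinearEquiv)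

end
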